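/- Let a be a binary sequence of period N, m an integer, and u = a ∥ L^m(ā), where ā is the complement of a. Then R_u(τ) = 2R_a(τ/2) if τ is even, and R_u(τ) = -R_a((τ-1)/2 + m) - R_a((τ+1)/2 - m) if τ is odd. -/

import Mathlib

/-- Periodic cross-correlation of binary sequences of period `M`. -/
def corr (M : ℕ) (x y : ZMod M → ZMod 2) (τ : ZMod M) : ℤ :=
  ∑ t ∈ Finset.range M, (-1 : ℤ) ^ ((x (t : ZMod M)).val + (y ((t : ZMod M) + τ)).val)

/-- Interleaving of two sequences: `(a∥b)(2i)=a(i)`, `(a∥b)(2i+1)=b(i)`. -/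
def il (N : ℕ) (a b : ZMod N → ZMod 2) : ZMod (2 * N) → ZMod 2 :=
  fun t => if t.val % 2 = 0 then a ((t.val / 2 : ℕ) : ZMod N)
           else b ((t.val / 2 : ℕ) : ZMod N)

lemma e1 (x y : ZMod 2) : (-1:ℤ)^((1-x).val + (1-y).val) = (-1:ℤ)^(x.val+y.val) := by revert x y; decide
lemma e2 (x y : ZMod 2) : (-1:ℤ)^(x.val + (1-y).val) = -(-1:ℤ)^(x.val+y.val) := by revert x y; decide
lemma e3 (x y : ZMod 2) : (-1:ℤ)^((1-x).val + y.val) = -(-1:ℤ)^(x.val+y.val) := by revert x y; decide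

lemma val_intCast' (N : ℕ) [NeZero N] (a : ℤ) : ((a : ZMod N)).val = (a % N).toNat := by
  have h := ZMod.val_intCast (n := N) a
  have h2 : 0 ≤ a % (N:ℤ) := Int.emod_nonneg a (by exact_mod_cast (NeZero.ne N))
  omega

lemma range_cast_sum (N : ℕ) [NeZero N] (g : ZMod N → ℤ) :
    ∑ t ∈ Finset.range N, g (t : ZMod N) = ∑ x : ZMod N, g x := by
  apply Finset.sum_nbij' (i := fun t => ((t : ℕ) : ZMod N)) (j := fun x => x.val)
  case hi => simp
  case hj => simp [Finset.mem_range, ZMod.val_lt]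
  case left_neg => intro t ht; simp only [Finset.mem_range] at ht; simp [ZMod.val_cast_of_lt ht]
  case right_neg => intro x hx; simp [ZMod.natCast_val, ZMod.cast_id]
  case h => intro t ht; rfl

lemma sum_shift (N : ℕ) [NeZero N] (f : ZMod N → ℤ) (c : ZMod N) :
    ∑ t ∈ Finset.range N, f ((t : ZMod N) + c) = ∑ t ∈ Finset.range N, f (t : ZMod N) := by
  rw [range_cast_sum N (fun x => f (x + c)), range_cast_sum N f]
  exact Fintype.sum_equiv (Equiv.addRight c) _ _ (fun x => rfl)

lemma sum_double (n : ℕ) (f : ℕ → ℤ) :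
    ∑ t ∈ Finset.range (2*n), f t = ∑ i ∈ Finset.range n, (f (2*i) + f (2*i+1)) := by
  induction n with
  | zero => simp
  | succ k ih =>
    rw [Finset.sum_range_succ, ← ih, show 2*(k+1) = 2*k+1+1 by ring,
      Finset.sum_range_succ, Finset.sum_range_succ]
    ring

lemma il_int (N : ℕ) (hN : N ≠ 0) (a b : ZMod N → ZMod 2) (k : ℤ) :
    il N a b ((k : ZMod (2 * N))) =
      if k % 2 = 0 then a ((k / 2 : ℤ) : ZMod N) else b ((k / 2 : ℤ) : ZMod N) := by
  have : NeZero N := ⟨hN⟩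
  have h2 : NeZero (2 * N) := ⟨by omega⟩
  have hval : ((k : ZMod (2 * N))).val = (k % ((2 * N : ℕ) : ℤ)).toNat := val_intCast' (2*N) k
  have hNpos : (0:ℤ) < ((2*N : ℕ) : ℤ) := by exact_mod_cast Nat.pos_of_ne_zero (by omega)
  set r : ℤ := k % ((2*N : ℕ) : ℤ) with hr
  set q : ℤ := k / ((2*N : ℕ) : ℤ) with hq
  have hk : ((2*N : ℕ) : ℤ) * q + r = k := Int.mul_ediv_add_emod k _
  have hrange : 0 ≤ r ∧ r < ((2*N:ℕ):ℤ) := ⟨Int.emod_nonneg k hNpos.ne', Int.emod_lt_of_pos k hNpos⟩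
  have hk' : 2 * ((N:ℤ) * q) + r = k := by push_cast at hk ⊢; linarith
  have hpar : r.toNat % 2 = 0 ↔ k % 2 = 0 := by
    generalize (N:ℤ) * q = p at hk'; omega
  have hq2 : k / 2 = r / 2 + (N:ℤ) * q := by
    rw [← hk', show 2*((N:ℤ)*q) + r = r + (N:ℤ)*q*2 by ring,
      Int.add_mul_ediv_right _ _ two_ne_zero]
  have hhalf : ((((k : ZMod (2*N))).val / 2 : ℕ) : ZMod N) = ((k / 2 : ℤ) : ZMod N) := by
    have h1 : (((k : ZMod (2*N))).val / 2 : ℕ) = (r / 2).toNat := by rw [hval]; omega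
    rw [h1, hq2]
    have h3 : (((r/2).toNat : ℤ)) = r / 2 := by omega
    calc ((r/2).toNat : ZMod N) = (((r/2).toNat : ℤ) : ZMod N) := by push_cast; ring
    _ = ((r/2 : ℤ) : ZMod N) := by rw [h3]
    _ = ((r/2 + (N:ℤ)*q : ℤ) : ZMod N) := by push_cast; simp
  have hpv : ((k : ZMod (2*N))).val % 2 = 0 ↔ k % 2 = 0 := by rw [hval]; exact hpar
  rcases em (k % 2 = 0) with h | h
  · rw [il, if_pos (hpv.mpr h), hhalf, if_pos h]
  · rw [il, if_neg (fun hc => h (hpv.mp hc)), hhalf, if_neg h]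

theorem stmt_10 (N : ℕ) (a : ZMod N → ZMod 2) (m : ℤ) (τ : ℤ)
    (u : ZMod (2 * N) → ZMod 2)
    (hu : u = il N a (fun t => 1 - a (t + (m : ZMod N)))) :
    (Even τ →
      corr (2 * N) u u (τ : ZMod (2 * N)) = 2 * corr N a a ((τ / 2 : ℤ) : ZMod N)) ∧
    (Odd τ →
      corr (2 * N) u u (τ : ZMod (2 * N)) =
        -corr N a a (((τ - 1) / 2 + m : ℤ) : ZMod N) - corr N a a (((τ + 1) / 2 - m : ℤ) : ZMod N)) := by
  rcases Nat.eq_zero_or_pos N with hN0 | hNpos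
  · subst hN0
    constructor <;> intro _ <;> simp [corr]
  have hN : N ≠ 0 := hNpos.ne'
  have : NeZero N := ⟨hN⟩
  subst hu
  set b : ZMod N → ZMod 2 := fun t => 1 - a (t + (m : ZMod N)) with hb
  have key : corr (2*N) (il N a b) (il N a b) ((τ : ZMod (2*N))) =
      ∑ i ∈ Finset.range N,
        ((-1:ℤ)^((il N a b ((2*(i:ℤ) : ℤ) : ZMod (2*N))).val
            + (il N a b ((2*(i:ℤ)+τ : ℤ) : ZMod (2*N))).val)
        + (-1:ℤ)^((il N a b ((2*(i:ℤ)+1 : ℤ) : ZMod (2*N))).val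
            + (il N a b ((2*(i:ℤ)+1+τ : ℤ) : ZMod (2*N))).val)) := by
    rw [corr]
    rw [Finset.sum_congr rfl (g := fun t : ℕ =>
      (-1:ℤ)^((il N a b (((t:ℤ) : ℤ) : ZMod (2*N))).val
        + (il N a b (((t:ℤ)+τ : ℤ) : ZMod (2*N))).val)) (fun t ht => by push_cast; ring_nf)]
    rw [sum_double]
    apply Finset.sum_congr rfl
    intro i hi
    push_cast
    ring_nf
  constructor
  · rintro ⟨s, hs⟩
    have hτ2 : τ / 2 = s := by omega
    rw [key, hτ2]
    have step : ∀ i ∈ Finset.range N,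
        ((-1:ℤ)^((il N a b ((2*(i:ℤ) : ℤ) : ZMod (2*N))).val
            + (il N a b ((2*(i:ℤ)+τ : ℤ) : ZMod (2*N))).val)
        + (-1:ℤ)^((il N a b ((2*(i:ℤ)+1 : ℤ) : ZMod (2*N))).val
            + (il N a b ((2*(i:ℤ)+1+τ : ℤ) : ZMod (2*N))).val))
        = (-1:ℤ)^((a (i:ZMod N)).val + (a ((i:ZMod N) + ((s:ℤ) : ZMod N))).val)
          + (-1:ℤ)^((a ((i:ZMod N) + (m:ZMod N))).val
            + (a (((i:ZMod N) + (m:ZMod N)) + ((s:ℤ) : ZMod N))).val) := by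
      intro i hi
      rw [il_int N hN a b, il_int N hN a b, il_int N hN a b, il_int N hN a b]
      rw [if_pos (by omega : (2*(i:ℤ)) % 2 = 0),
          if_pos (by omega : (2*(i:ℤ)+τ) % 2 = 0),
          if_neg (by omega : ¬ (2*(i:ℤ)+1) % 2 = 0),
          if_neg (by omega : ¬ (2*(i:ℤ)+1+τ) % 2 = 0)]
      rw [show (2*(i:ℤ))/2 = (i:ℤ) by omega,
          show (2*(i:ℤ)+τ)/2 = (i:ℤ) + s by omega,
          show (2*(i:ℤ)+1)/2 = (i:ℤ) by omega,
          show (2*(i:ℤ)+1+τ)/2 = (i:ℤ) + s by omega]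
      simp only [hb]
      rw [e1]
      push_cast
      ring_nf
    rw [Finset.sum_congr rfl step, Finset.sum_add_distrib]
    rw [sum_shift N (fun x => (-1:ℤ)^((a x).val + (a (x + ((s:ℤ) : ZMod N))).val)) ((m:ZMod N))]
    rw [corr]
    ring
  · rintro ⟨s, hs⟩
    have h1 : (τ - 1)/2 + m = s + m := by omega
    have h2 : (τ + 1)/2 - m = s + 1 - m := by omega
    rw [key, h1, h2]
    have step : ∀ i ∈ Finset.range N,
        ((-1:ℤ)^((il N a b ((2*(i:ℤ) : ℤ) : ZMod (2*N))).val
            + (il N a b ((2*(i:ℤ)+τ : ℤ) : ZMod (2*N))).val)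
        + (-1:ℤ)^((il N a b ((2*(i:ℤ)+1 : ℤ) : ZMod (2*N))).val
            + (il N a b ((2*(i:ℤ)+1+τ : ℤ) : ZMod (2*N))).val))
        = -(-1:ℤ)^((a (i:ZMod N)).val + (a ((i:ZMod N) + ((s+m:ℤ) : ZMod N))).val)
          + -(-1:ℤ)^((a ((i:ZMod N) + (m:ZMod N))).val
            + (a (((i:ZMod N) + (m:ZMod N)) + ((s+1-m:ℤ) : ZMod N))).val) := by
      intro i hi
      rw [il_int N hN a b, il_int N hN a b, il_int N hN a b, il_int N hN a b]
      rw [if_pos (by omega : (2*(i:ℤ)) % 2 = 0),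
          if_neg (by omega : ¬ (2*(i:ℤ)+τ) % 2 = 0),
          if_neg (by omega : ¬ (2*(i:ℤ)+1) % 2 = 0),
          if_pos (by omega : (2*(i:ℤ)+1+τ) % 2 = 0)]
      rw [show (2*(i:ℤ))/2 = (i:ℤ) by omega,
          show (2*(i:ℤ)+τ)/2 = (i:ℤ) + s by omega,
          show (2*(i:ℤ)+1)/2 = (i:ℤ) by omega,
          show (2*(i:ℤ)+1+τ)/2 = (i:ℤ) + s + 1 by omega]
      simp only [hb]
      rw [e2, e3]
      push_cast
      ring_nf
    rw [Finset.sum_congr rfl step, Finset.sum_add_distrib]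
    rw [show (∑ i ∈ Finset.range N, -(-1:ℤ)^((a ((i:ZMod N) + (m:ZMod N))).val
            + (a (((i:ZMod N) + (m:ZMod N)) + ((s+1-m:ℤ) : ZMod N))).val))
        = -∑ i ∈ Finset.range N, (fun x => (-1:ℤ)^((a x).val + (a (x + ((s+1-m:ℤ) : ZMod N))).val)) ((i:ZMod N) + (m:ZMod N)) by
          rw [← Finset.sum_neg_distrib]]
    rw [sum_shift N (fun x => (-1:ℤ)^((a x).val + (a (x + ((s+1-m:ℤ) : ZMod N))).val)) ((m:ZMod N))]
    rw [corr, corr]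
    push_cast
    simp only [pow_add, Finset.sum_neg_distrib]
    ring
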